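/- With N_j defined as the 3x3 matrix with rows (u_j, -a*d*y_j, -a*d*x_j - b*d*y_j), (x_j, u_j - b*x_j - c*y_j, -c*x_j - d*y_j), (y_j, a*x_j, u_j - c*y_j) over a commutative ring, matrix multiplication is commutative: N_1*N_2 = N_2*N_1. -/
import Mathlib


theorem cubic_matrix_comm {R : Type*} [CommRing R] (a b c d u1 x1 y1 u2 x2 y2 : R) :
    (!![u1, -a * d * y1, -a * d * x1 - b * d * y1;
        x1, u1 - b * x1 - c * y1, -c * x1 - d * y1;
        y1, a * x1, u1 - c * y1] : Matrix (Fin 3) (Fin 3) R) *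
      !![u2, -a * d * y2, -a * d * x2 - b * d * y2;
         x2, u2 - b * x2 - c * y2, -c * x2 - d * y2;
         y2, a * x2, u2 - c * y2] =
    !![u2, -a * d * y2, -a * d * x2 - b * d * y2;
       x2, u2 - b * x2 - c * y2, -c * x2 - d * y2;
       y2, a * x2, u2 - c * y2] *
      !![u1, -a * d * y1, -a * d * x1 - b * d * y1;
         x1, u1 - b * x1 - c * y1, -c * x1 - d * y1;
         y1, a * x1, u1 - c * y1] := by
  ext i j
  fin_cases i <;> fin_cases j <;> simp [Matrix.mul_apply, Fin.sum_univ_three] <;> ring
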